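/- Let (B_j) be an inverse system of modules over a local ring (A, m) with m^{u+1} = 0, and suppose for each j the system of relation modules M_j = {(h₁,…,h_r) ∈ (B_j/mB_j)^r : Σ a_i h_i = 0 in m^u B_j} (for a fixed k-basis a₁,…,a_r of m^u, k = A/m) satisfies the Mittag-Leffler condition with zero transition maps cofinally (for each j there is n > j with M_n → M_j zero). Then the natural map m^u ⊗_k lim← (B_j/mB_j) → lim← (m^u B_j) is an isomorphism. -/
import Mathlib


open IsLocalRing

/- STATEMENT 18: Let (B_j) be an inverse system of algebras over a local ring (A, m) with
m^{u+1} = 0 and residue field k, and fix a k-basis a₁,…,a_r of m^u.  Suppose the relation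
modules M_j = {(h₁,…,h_r) ∈ (B_j/mB_j)^r : Σ aᵢhᵢ = 0} satisfy the Mittag-Leffler condition
with cofinally zero transition maps.  Then the natural map
m^u ⊗_k lim←(B_j/mB_j) → lim←(m^u B_j) is an isomorphism; equivalently, every compatible
family F ∈ lim←(m^u B_j) can be written uniquely as F = Σ aᵢ gᵢ with gᵢ ∈ lim←(B_j/mB_j). -/

/-- Multiplication by `a ∈ m^u` descends to `N/mN → N` when `m^{u+1} = 0`. -/
noncomputable def powSmulLift (A : Type u) [CommRing A] [IsLocalRing A] (u' : ℕ)
    (hm : (maximalIdeal A) ^ (u' + 1) = ⊥) (a : A) (ha : a ∈ (maximalIdeal A) ^ u')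
    (N : Type v) [AddCommGroup N] [Module A N] :
    (N ⧸ ((maximalIdeal A) • (⊤ : Submodule A N))) →ₗ[A] N :=
  Submodule.liftQ _ (LinearMap.lsmul A N a) (by
    intro x hx
    simp only [LinearMap.mem_ker, LinearMap.lsmul_apply]
    refine Submodule.smul_induction_on hx (fun c hc n _ => ?_) (fun y z hy hz => ?_)
    · rw [smul_comm, ← smul_assoc]
      have h1 : c • a ∈ (maximalIdeal A) • ((maximalIdeal A) ^ u') :=
        Submodule.smul_mem_smul hc ha
      have h2 : (maximalIdeal A) • ((maximalIdeal A) ^ u') = (maximalIdeal A) ^ (u' + 1) := by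
        rw [smul_eq_mul, pow_succ']
      rw [h2, hm] at h1
      rw [Ideal.mem_bot.mp h1, zero_smul]
    · rw [smul_add, hy, hz, add_zero])

/-- An `A`-algebra map descends to the quotients by `m·(-)`. -/
noncomputable def quotStep {A : Type u} [CommRing A] [IsLocalRing A]
    {N₁ : Type v} {N₂ : Type w} [CommRing N₁] [CommRing N₂] [Algebra A N₁] [Algebra A N₂]
    (φ : N₁ →ₐ[A] N₂) :
    (N₁ ⧸ ((maximalIdeal A) • (⊤ : Submodule A N₁))) →ₗ[A]
      (N₂ ⧸ ((maximalIdeal A) • (⊤ : Submodule A N₂))) :=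
  Submodule.mapQ _ _ φ.toLinearMap (by
    rw [← Submodule.map_le_iff_le_comap, Submodule.map_smul'']
    exact Submodule.smul_mono le_rfl le_top)

/-- Composite of the transition maps of the inverse system. -/
noncomputable def chainComp {A : Type u} [CommRing A] (B : ℕ → Type v)
    [∀ j, CommRing (B j)] [∀ j, Algebra A (B j)]
    (f : ∀ j, B (j + 1) →ₐ[A] B j) (j : ℕ) : (d : ℕ) → (B (j + d) →ₐ[A] B j)
  | 0 => AlgHom.id A (B j)
  | (d + 1) => (chainComp B f j d).comp (f (j + d))

section Aux

variable {A : Type} [CommRing A] [IsLocalRing A]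
variable {B : ℕ → Type} [∀ j, CommRing (B j)] [∀ j, Algebra A (B j)]
variable (f : ∀ j, B (j + 1) →ₐ[A] B j)

lemma my_quotStep_mk {N₁ N₂ : Type} [CommRing N₁] [CommRing N₂] [Algebra A N₁] [Algebra A N₂]
    (φ : N₁ →ₐ[A] N₂) (x : N₁) :
    quotStep φ (Submodule.Quotient.mk x) = Submodule.Quotient.mk (φ x) := rfl

lemma my_powSmulLift_mk (u' : ℕ) (hm : (maximalIdeal A) ^ (u' + 1) = ⊥) (aa : A)
    (haa : aa ∈ (maximalIdeal A) ^ u') (N : Type) [AddCommGroup N] [Module A N] (x : N) :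
    powSmulLift A u' hm aa haa N (Submodule.Quotient.mk x) = aa • x := rfl

lemma my_cast_f {m m' : ℕ} (h : m = m') (h2 : B (m + 1) = B (m' + 1)) (x : B (m + 1)) :
    f m' (cast h2 x) = cast (congrArg B h) (f m x) := by subst h; rfl

lemma my_chainComp_congr (j : ℕ) {e e' : ℕ} (h : e = e') (h2 : B (j + e) = B (j + e'))
    (x : B (j + e)) :
    chainComp B f j e' (cast h2 x) = chainComp B f j e x := by subst h; rfl

lemma my_chainComp_add (j d : ℕ) : ∀ (e : ℕ) (h : B (j + d + e) = B (j + (d + e)))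
    (x : B (j + d + e)),
    chainComp B f j (d + e) (cast h x) = chainComp B f j d (chainComp B f (j + d) e x) := by
  intro e
  induction e with
  | zero => intro h x; rfl
  | succ e ih =>
      intro h x
      have h' : j + d + e = j + (d + e) := by omega
      calc chainComp B f j (d + (e + 1)) (cast h x)
          = chainComp B f j (d + e) (f (j + (d + e)) (cast h x)) := rfl
        _ = chainComp B f j (d + e) (cast (congrArg B h') (f (j + d + e) x)) := by
              rw [my_cast_f f h']
        _ = chainComp B f j d (chainComp B f (j + d) e (f (j + d + e) x)) := ih _ _
        _ = chainComp B f j d (chainComp B f (j + d) (e + 1) x) := rfl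

lemma my_f_chainComp (j : ℕ) : ∀ (e : ℕ) (h : B (j + 1 + e) = B (j + (e + 1)))
    (x : B (j + 1 + e)),
    chainComp B f j (e + 1) (cast h x) = f j (chainComp B f (j + 1) e x) := by
  intro e
  induction e with
  | zero => intro h x; rfl
  | succ e ih =>
      intro h x
      have h' : j + 1 + e = j + (e + 1) := by omega
      calc chainComp B f j (e + 1 + 1) (cast h x)
          = chainComp B f j (e + 1) (f (j + (e + 1)) (cast h x)) := rfl
        _ = chainComp B f j (e + 1) (cast (congrArg B h') (f (j + 1 + e) x)) := by
              rw [my_cast_f f h']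
        _ = f j (chainComp B f (j + 1) e (f (j + 1 + e) x)) := ih _ _
        _ = f j (chainComp B f (j + 1) (e + 1) x) := rfl

lemma my_chainComp_F (F : ∀ j, B j) (hFcompat : ∀ j, f j (F (j + 1)) = F j) (j : ℕ) :
    ∀ e : ℕ, chainComp B f j e (F (j + e)) = F j := by
  intro e
  induction e with
  | zero => rfl
  | succ e ih =>
      have h1 : chainComp B f j (e + 1) (F (j + (e + 1)))
          = chainComp B f j e (f (j + e) (F (j + e + 1))) := rfl
      rw [h1, hFcompat, ih]

lemma my_quotStep_chainComp (j : ℕ)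
    (y : ∀ n, B n ⧸ ((maximalIdeal A) • (⊤ : Submodule A (B n))))
    (hy : ∀ n, quotStep (f n) (y (n + 1)) = y n) :
    ∀ e : ℕ, quotStep (chainComp B f j e) (y (j + e)) = y j := by
  intro e
  induction e with
  | zero =>
      obtain ⟨z, hz⟩ := Submodule.Quotient.mk_surjective _ (y j)
      show quotStep (chainComp B f j 0) (y j) = y j
      rw [← hz]; rfl
  | succ e ih =>
      obtain ⟨z, hz⟩ := Submodule.Quotient.mk_surjective _ (y (j + (e + 1)))
      have h1 : quotStep (chainComp B f j (e + 1)) (y (j + (e + 1)))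
          = quotStep (chainComp B f j e) (quotStep (f (j + e)) (y (j + (e + 1)))) := by
        rw [← hz]; rfl
      have h2 : quotStep (f (j + e)) (y (j + (e + 1))) = y (j + e) := hy (j + e)
      rw [h1, h2, ih]

end Aux

set_option maxHeartbeats 1000000 in
theorem stmt18 (k : Type) [Field k] (A : Type) [CommRing A] [Algebra k A] [IsLocalRing A]
    -- A has residue field k :
    (hres : ∀ x : A, ∃ c : k, x - algebraMap k A c ∈ maximalIdeal A)
    (u r : ℕ) (hm : (maximalIdeal A) ^ (u + 1) = ⊥)
    -- a₁, …, a_r is a k-basis of m^u :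
    (a : Fin r → A) (ha : ∀ i, a i ∈ (maximalIdeal A) ^ u)
    (hspan : ∀ x ∈ (maximalIdeal A) ^ u, ∃ c : Fin r → k, x = ∑ i, c i • a i)
    (hindep : ∀ c : Fin r → k, ∑ i, c i • a i = 0 → c = 0)
    -- the inverse system (B_j) :
    (B : ℕ → Type) [∀ j, CommRing (B j)] [∀ j, Algebra A (B j)]
    (f : ∀ j, B (j + 1) →ₐ[A] B j)
    -- Mittag-Leffler: for each j some M_{j+d} → M_j is zero :
    (hML : ∀ j : ℕ, ∃ d : ℕ, 0 < d ∧
      ∀ h : Fin r → (B (j + d) ⧸ ((maximalIdeal A) • (⊤ : Submodule A (B (j + d))))),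
        (∑ i, powSmulLift A u hm (a i) (ha i) (B (j + d)) (h i)) = 0 →
        ∀ i, quotStep (chainComp B f j d) (h i) = 0)
    -- an element F of lim← (m^u B_j) :
    (F : ∀ j, B j)
    (hFmem : ∀ j, F j ∈ ((maximalIdeal A) ^ u • (⊤ : Submodule A (B j))))
    (hFcompat : ∀ j, f j (F (j + 1)) = F j) :
    -- F = Σ aᵢ gᵢ for a unique g ∈ (lim← B_j/mB_j)^r :
    ∃! g : Fin r → (∀ j, B j ⧸ ((maximalIdeal A) • (⊤ : Submodule A (B j)))),
      (∀ i j, quotStep (f j) (g i (j + 1)) = g i j) ∧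
      (∀ j, F j = ∑ i, powSmulLift A u hm (a i) (ha i) (B j) (g i j)) := by
  classical
  -- every element of m^u • ⊤ is of the form ∑ aᵢ • bᵢ
  have rep : ∀ (j : ℕ) (x : B j), x ∈ ((maximalIdeal A) ^ u • (⊤ : Submodule A (B j))) →
      ∃ bb : Fin r → B j, x = ∑ i, a i • bb i := by
    intro j x hx
    refine Submodule.smul_induction_on hx ?_ ?_
    · intro c hc n _
      obtain ⟨κ, hκ⟩ := hspan c hc
      refine ⟨fun i => algebraMap k A (κ i) • n, ?_⟩
      rw [hκ, Finset.sum_smul]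
      refine Finset.sum_congr rfl fun i _ => ?_
      have hsa : (κ i • a i : A) = algebraMap k A (κ i) * a i := Algebra.smul_def _ _
      rw [hsa, mul_smul]
      exact smul_comm _ _ _
    · rintro x y ⟨bx, hbx⟩ ⟨by', hby⟩
      refine ⟨fun i => bx i + by' i, ?_⟩
      rw [hbx, hby, ← Finset.sum_add_distrib]
      exact Finset.sum_congr rfl fun i _ => (smul_add _ _ _).symm
  choose b hb using fun j => rep j (F j) (hFmem j)
  choose d hd0 hdML using hML
  -- stability of the class of a representative
  have S : ∀ (j e : ℕ) (b' : Fin r → B (j + d j + e)),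
      F (j + d j + e) = ∑ i, a i • b' i → ∀ i,
      (Submodule.Quotient.mk (chainComp B f j (d j) (chainComp B f (j + d j) e (b' i)))
        : B j ⧸ ((maximalIdeal A) • (⊤ : Submodule A (B j))))
        = Submodule.Quotient.mk (chainComp B f j (d j) (b (j + d j) i)) := by
    intro j e b' hb' i
    have hrel : (∑ i, powSmulLift A u hm (a i) (ha i) (B (j + d j))
        ((fun i => (Submodule.Quotient.mk (chainComp B f (j + d j) e (b' i) - b (j + d j) i)
          : B (j + d j) ⧸ ((maximalIdeal A) • (⊤ : Submodule A (B (j + d j)))))) i)) = 0 := by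
      have hterm : ∀ i : Fin r, powSmulLift A u hm (a i) (ha i) (B (j + d j))
          (Submodule.Quotient.mk (chainComp B f (j + d j) e (b' i) - b (j + d j) i))
          = a i • chainComp B f (j + d j) e (b' i) - a i • b (j + d j) i := by
        intro i
        rw [my_powSmulLift_mk, smul_sub]
      rw [Finset.sum_congr rfl fun i _ => hterm i, Finset.sum_sub_distrib]
      have h1 : ∑ i, a i • chainComp B f (j + d j) e (b' i) = F (j + d j) := by
        have h2 := my_chainComp_F f F hFcompat (j + d j) e
        rw [hb'] at h2
        rw [← h2, map_sum]
        exact Finset.sum_congr rfl fun i _ => (map_smul _ _ _).symm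
      rw [h1, ← hb (j + d j), sub_self]
    have key := hdML j _ hrel i
    have key2 : (Submodule.Quotient.mk (chainComp B f j (d j)
        (chainComp B f (j + d j) e (b' i) - b (j + d j) i))
        : B j ⧸ ((maximalIdeal A) • (⊤ : Submodule A (B j)))) = 0 := key
    rw [map_sub, Submodule.Quotient.mk_sub, sub_eq_zero] at key2
    exact key2
  -- stability with an explicit level equality
  have S2 : ∀ (j e N : ℕ), N = j + d j + e → ∀ (h2 : B N = B (j + (d j + e)))
      (b' : Fin r → B N), F N = ∑ i, a i • b' i → ∀ i,
      (Submodule.Quotient.mk (chainComp B f j (d j + e) (cast h2 (b' i)))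
        : B j ⧸ ((maximalIdeal A) • (⊤ : Submodule A (B j))))
        = Submodule.Quotient.mk (chainComp B f j (d j) (b (j + d j) i)) := by
    intro j e N hN
    subst hN
    intro h2 b' hb' i
    rw [my_chainComp_add f j (d j) e h2 (b' i)]
    exact S j e b' hb' i
  -- the candidate limit element and its compatibility
  have hgc : ∀ (i : Fin r) (j : ℕ),
      quotStep (f j) (Submodule.Quotient.mk
        (chainComp B f (j + 1) (d (j + 1)) (b (j + 1 + d (j + 1)) i)))
      = Submodule.Quotient.mk (chainComp B f j (d j) (b (j + d j) i)) := by
    intro i j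
    set N := j + 1 + d (j + 1) + d j with hNdef
    have hcast1 : B N = B (j + 1 + (d (j + 1) + d j)) := congrArg B (by omega)
    have hcast2 : B (j + 1 + (d (j + 1) + d j)) = B (j + (d (j + 1) + d j + 1)) :=
      congrArg B (by omega)
    have hcast3 : B N = B (j + (d j + (1 + d (j + 1)))) := congrArg B (by omega)
    have h2' : B (j + (d j + (1 + d (j + 1)))) = B (j + (d (j + 1) + d j + 1)) :=
      congrArg B (by omega)
    have hA := S2 (j + 1) (d j) N hNdef hcast1 (b N) (hb N) i
    have hB : quotStep (f j) (Submodule.Quotient.mk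
        (chainComp B f (j + 1) (d (j + 1)) (b (j + 1 + d (j + 1)) i)))
        = (Submodule.Quotient.mk (f j (chainComp B f (j + 1) (d (j + 1) + d j)
            (cast hcast1 (b N i))))
          : B j ⧸ ((maximalIdeal A) • (⊤ : Submodule A (B j)))) := by
      rw [← hA]; rfl
    have hC : f j (chainComp B f (j + 1) (d (j + 1) + d j) (cast hcast1 (b N i)))
        = chainComp B f j (d (j + 1) + d j + 1) (cast hcast2 (cast hcast1 (b N i))) :=
      (my_f_chainComp f j (d (j + 1) + d j) hcast2 (cast hcast1 (b N i))).symm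
    have hcc : cast hcast2 (cast hcast1 (b N i)) = cast h2' (cast hcast3 (b N i)) := by
      rw [cast_cast, cast_cast]
    have hD : chainComp B f j (d (j + 1) + d j + 1) (cast h2' (cast hcast3 (b N i)))
        = chainComp B f j (d j + (1 + d (j + 1))) (cast hcast3 (b N i)) :=
      my_chainComp_congr f j (by omega) h2' (cast hcast3 (b N i))
    have hE := S2 j (1 + d (j + 1)) N (by omega) hcast3 (b N) (hb N) i
    rw [hB, hC, hcc, hD]
    exact hE
  -- the value identity
  have hgv : ∀ j : ℕ, F j = ∑ i, powSmulLift A u hm (a i) (ha i) (B j)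
      (Submodule.Quotient.mk (chainComp B f j (d j) (b (j + d j) i))) := by
    intro j
    have h1 := my_chainComp_F f F hFcompat j (d j)
    rw [hb (j + d j)] at h1
    rw [← h1, map_sum]
    refine Finset.sum_congr rfl fun i _ => ?_
    rw [map_smul, my_powSmulLift_mk]
  refine ⟨fun i j => Submodule.Quotient.mk (chainComp B f j (d j) (b (j + d j) i)),
    ⟨hgc, hgv⟩, ?_⟩
  rintro y ⟨hyc, hyv⟩
  funext i j
  show y i j = Submodule.Quotient.mk (chainComp B f j (d j) (b (j + d j) i))
  have hyd := my_quotStep_chainComp f j (y i) (fun n => hyc i n) (d j)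
  have hgd := my_quotStep_chainComp f j
    (fun n => Submodule.Quotient.mk (chainComp B f n (d n) (b (n + d n) i)))
    (fun n => hgc i n) (d j)
  have hrel : (∑ i', powSmulLift A u hm (a i') (ha i') (B (j + d j))
      ((fun i' => y i' (j + d j) -
        Submodule.Quotient.mk (chainComp B f (j + d j) (d (j + d j))
          (b (j + d j + d (j + d j)) i'))) i')) = 0 := by
    have : ∀ i' : Fin r, powSmulLift A u hm (a i') (ha i') (B (j + d j))
        (y i' (j + d j) - Submodule.Quotient.mk (chainComp B f (j + d j) (d (j + d j))
          (b (j + d j + d (j + d j)) i')))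
        = powSmulLift A u hm (a i') (ha i') (B (j + d j)) (y i' (j + d j))
          - powSmulLift A u hm (a i') (ha i') (B (j + d j))
            (Submodule.Quotient.mk (chainComp B f (j + d j) (d (j + d j))
              (b (j + d j + d (j + d j)) i'))) := fun i' => map_sub _ _ _
    rw [Finset.sum_congr rfl fun i' _ => this i', Finset.sum_sub_distrib,
      ← hyv (j + d j), ← hgv (j + d j), sub_self]
  have key := hdML j _ hrel i
  rw [map_sub, sub_eq_zero] at key
  have key2 : quotStep (chainComp B f j (d j)) (y i (j + d j))
      = quotStep (chainComp B f j (d j))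
        (Submodule.Quotient.mk (chainComp B f (j + d j) (d (j + d j))
          (b (j + d j + d (j + d j)) i))) := key
  rw [hyd] at key2
  rw [key2]
  exact hgd
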